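/- If x is a vertex of G₂ with Z(x) = S, then the degree of x in G₂ equals ∏_{i ∈ S} (p_i − 1) · ( ∏_{j ∈ S^c} p_j − ∏_{j ∈ S^c} (p_j − 1) ), where S^c = {1,…,m} ∖ S. -/

import Mathlib

open Finset

abbrev NN (m : ℕ) (p : Fin m → ℕ) : ℕ := ∏ i, p i

abbrev Vtx (m : ℕ) (p : Fin m → ℕ) : Type :=
  {x : ZMod (NN m p) // x ≠ 0 ∧ ¬ IsUnit x}

/-- The induced subgraph `G₂` of the comaximal graph of `ℤ/nℤ` on nonzero nonunits. -/
def G2 (m : ℕ) (p : Fin m → ℕ) : SimpleGraph (Vtx m p) where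
  Adj x y := x ≠ y ∧ Ideal.span ({x.1, y.1} : Set (ZMod (NN m p))) = ⊤
  symm := by
    refine ⟨?_⟩
    rintro x y ⟨hxy, h⟩
    exact ⟨hxy.symm, by rwa [Set.pair_comm]⟩
  loopless := by refine ⟨?_⟩; rintro x ⟨h, -⟩; exact h rfl

/-- The zero-set of `x`: indices `i` where the image of `x` in `ℤ/p_iℤ` is zero. -/
def Z (m : ℕ) (p : Fin m → ℕ) (x : ZMod (NN m p)) : Finset (Fin m) :=
  Finset.univ.filter fun i =>
    (ZMod.castHom (Finset.dvd_prod_of_mem p (Finset.mem_univ i)) (ZMod (p i))) x = 0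

/-- The class `X_S` of vertices of `G₂` with zero-set `S`. -/
def XS (m : ℕ) (p : Fin m → ℕ) (S : Finset (Fin m)) : Set (Vtx m p) :=
  {x | Z m p x.1 = S}

theorem stmt5 (m : ℕ) (hm : 2 ≤ m) (p : Fin m → ℕ) (hp : ∀ i, (p i).Prime)
    (hmono : StrictMono p) (x : Vtx m p) (S : Finset (Fin m)) (hx : Z m p x.1 = S) :
    ((G2 m p).neighborSet x).ncard =
      (∏ i ∈ S, (p i - 1)) * ((∏ j ∈ Sᶜ, p j) - ∏ j ∈ Sᶜ, (p j - 1)) := by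
  classical
  haveI hfact : ∀ i, Fact (p i).Prime := fun i => ⟨hp i⟩
  have hco : Pairwise (Function.onFun Nat.Coprime p) := fun i j hij =>
    (Nat.coprime_primes (hp i) (hp j)).mpr fun h => hij (hmono.injective h)
  haveI : NeZero (NN m p) := ⟨Finset.prod_ne_zero_iff.mpr fun i _ => (hp i).pos.ne'⟩
  set e := ZMod.prodEquivPi p hco with he_def
  -- component formula
  have he : ∀ (y : ZMod (NN m p)) i, e y i =
      (ZMod.castHom (Finset.dvd_prod_of_mem p (Finset.mem_univ i)) (ZMod (p i))) y := by
    intro y i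
    exact RingHom.congr_fun (RingHom.ext_zmod
      ((Pi.evalRingHom _ i).comp (e : ZMod (NN m p) →+* Π i, ZMod (p i))) _) y
  -- unit characterization
  have hunit : ∀ y : ZMod (NN m p), IsUnit y ↔ ∀ i, e y i ≠ 0 := by
    intro y
    constructor
    · intro hy i h0
      have h2 : IsUnit (e y i) :=
        hy.map ((Pi.evalRingHom (fun i => ZMod (p i)) i).comp
          (e : ZMod (NN m p) →+* Π i, ZMod (p i)))
      rw [h0] at h2
      exact h2.ne_zero rfl
    · intro h
      have h2 : IsUnit (e y) := by
        refine IsUnit.of_mul_eq_one (fun i => (e y i)⁻¹) ?_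
        funext i
        simp only [Pi.mul_apply, Pi.one_apply]
        exact mul_inv_cancel₀ (h i)
      have h3 := h2.map (e.symm : (Π i, ZMod (p i)) →+* ZMod (NN m p))
      simpa using h3
  -- membership in S
  have hS : ∀ i, i ∈ S ↔ e x.1 i = 0 := by
    intro i
    rw [← hx, Z, Finset.mem_filter, he]
    simp
  -- S is nonempty
  obtain ⟨i₀, hi₀⟩ : ∃ i, i ∈ S := by
    by_contra h
    push_neg at h
    exact x.2.2 ((hunit x.1).mpr fun i => fun h0 => h i ((hS i).mpr h0))
  -- adjacency characterization
  have hadj : ∀ y : Vtx m p, (G2 m p).Adj x y ↔ ∀ i ∈ S, e y.1 i ≠ 0 := by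
    intro y
    constructor
    · rintro ⟨-, hspan⟩ i hiS h0
      have h1 : (1 : ZMod (NN m p)) ∈ Ideal.span ({x.1, y.1} : Set (ZMod (NN m p))) := by
        rw [hspan]; trivial
      rw [Ideal.mem_span_pair] at h1
      obtain ⟨a, b, hab⟩ := h1
      have h2 : e a i * e x.1 i + e b i * e y.1 i = 1 := by
        have h3 := congrArg (fun f => f i) (congrArg e hab)
        simpa using h3
      rw [(hS i).mp hiS, h0] at h2
      simp at h2
    · intro h
      have hxy : x ≠ y := by
        intro hxy
        exact h i₀ hi₀ (hxy ▸ (hS i₀).mp hi₀)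
      refine ⟨hxy, ?_⟩
      rw [Ideal.eq_top_iff_one, Ideal.mem_span_pair]
      refine ⟨e.symm (fun i => if e x.1 i ≠ 0 then (e x.1 i)⁻¹ else 0),
        e.symm (fun i => if e x.1 i ≠ 0 then 0 else (e y.1 i)⁻¹), ?_⟩
      apply e.injective
      simp only [map_add, map_mul, map_one, RingEquiv.apply_symm_apply]
      funext i
      simp only [Pi.add_apply, Pi.mul_apply, Pi.one_apply]
      by_cases hxi : e x.1 i ≠ 0
      · rw [if_pos hxi, if_pos hxi]
        field_simp
        simp
      · rw [if_neg hxi, if_neg hxi]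
        push_neg at hxi
        have hyi : e y.1 i ≠ 0 := h i ((hS i).mpr hxi)
        field_simp
        simp
  -- the counting finsets
  set A : Finset (Π i, ZMod (p i)) :=
    Fintype.piFinset (fun i => if i ∈ S then Finset.univ.filter (· ≠ 0) else Finset.univ)
    with hA_def
  set B : Finset (Π i, ZMod (p i)) :=
    Fintype.piFinset (fun i => Finset.univ.filter (· ≠ (0 : ZMod (p i)))) with hB_def
  have hmemA : ∀ f : Π i, ZMod (p i), f ∈ A ↔ ∀ i ∈ S, f i ≠ 0 := by
    intro f
    rw [hA_def, Fintype.mem_piFinset]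
    constructor
    · intro h i hi
      have := h i
      rw [if_pos hi, Finset.mem_filter] at this
      exact this.2
    · intro h i
      by_cases hi : i ∈ S
      · rw [if_pos hi, Finset.mem_filter]
        exact ⟨Finset.mem_univ _, h i hi⟩
      · rw [if_neg hi]; exact Finset.mem_univ _
  have hmemB : ∀ f : Π i, ZMod (p i), f ∈ B ↔ ∀ i, f i ≠ 0 := by
    intro f
    rw [hB_def, Fintype.mem_piFinset]
    simp
  have hcard : ∀ i, Fintype.card (ZMod (p i)) = p i := fun i => ZMod.card _
  -- the key equiv
  have hequiv : ((G2 m p).neighborSet x) ≃ ↥(A \ B) := by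
    refine ⟨fun y => ⟨e y.1.1, ?_⟩, fun f => ⟨⟨e.symm f.1, ?_, ?_⟩, ?_⟩, ?_, ?_⟩
    · obtain ⟨y, hy⟩ := y
      rw [Finset.mem_sdiff, hmemA, hmemB]
      refine ⟨(hadj y).mp hy, ?_⟩
      intro hall
      exact y.2.2 ((hunit y.1).mpr hall)
    · obtain ⟨f, hf⟩ := f
      rw [Finset.mem_sdiff, hmemA] at hf
      intro h0
      have : f = 0 := by rw [← map_zero e, ← h0, RingEquiv.apply_symm_apply]
      exact hf.1 i₀ hi₀ (by rw [this]; rfl)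
    · obtain ⟨f, hf⟩ := f
      rw [Finset.mem_sdiff, hmemB] at hf
      intro hu
      apply hf.2
      have := (hunit _).mp hu
      intro i
      have := this i
      rwa [RingEquiv.apply_symm_apply] at this
    · obtain ⟨f, hf⟩ := f
      rw [Finset.mem_sdiff, hmemA] at hf
      rw [SimpleGraph.mem_neighborSet, hadj]
      intro i hi
      simp only [RingEquiv.apply_symm_apply]
      exact hf.1 i hi
    · rintro ⟨⟨y, hy1⟩, hy2⟩
      exact Subtype.ext (Subtype.ext (e.symm_apply_apply y))
    · rintro ⟨f, hf⟩
      simp only [Subtype.mk.injEq]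
      exact e.apply_symm_apply f
  -- card computations
  have hBsubA : B ⊆ A := by
    intro f hf
    rw [hmemB] at hf
    rw [hmemA]
    exact fun i _ => hf i
  have hcardA : A.card = (∏ i ∈ S, (p i - 1)) * ∏ j ∈ Sᶜ, p j := by
    rw [hA_def, Fintype.card_piFinset]
    rw [← Finset.prod_filter_mul_prod_filter_not Finset.univ (· ∈ S)]
    congr 1
    · rw [show Finset.univ.filter (· ∈ S) = S by ext i; simp]
      apply Finset.prod_congr rfl
      intro i hi
      rw [if_pos hi, Finset.filter_ne', Finset.card_erase_of_mem (Finset.mem_univ _),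
        Finset.card_univ, hcard]
    · rw [show Finset.univ.filter (¬ · ∈ S) = Sᶜ by ext i; simp]
      apply Finset.prod_congr rfl
      intro i hi
      rw [Finset.mem_compl] at hi
      rw [if_neg hi, Finset.card_univ, hcard]
  have hcardB : B.card = (∏ i ∈ S, (p i - 1)) * ∏ j ∈ Sᶜ, (p j - 1) := by
    rw [hB_def, Fintype.card_piFinset]
    rw [← Finset.prod_mul_prod_compl S]
    congr 1 <;>
    · apply Finset.prod_congr rfl
      intro i _
      rw [Finset.filter_ne', Finset.card_erase_of_mem (Finset.mem_univ _),
        Finset.card_univ, hcard]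
  calc ((G2 m p).neighborSet x).ncard
      = Nat.card ((G2 m p).neighborSet x) := (Nat.card_coe_set_eq _).symm
    _ = Nat.card ↥(A \ B) := Nat.card_congr hequiv
    _ = (A \ B).card := Nat.card_eq_finsetCard _
    _ = A.card - B.card := Finset.card_sdiff_of_subset hBsubA
    _ = (∏ i ∈ S, (p i - 1)) * ((∏ j ∈ Sᶜ, p j) - ∏ j ∈ Sᶜ, (p j - 1)) := by
        rw [hcardA, hcardB, Nat.mul_sub]
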